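/- Let n ≥ 1 and let σ : [t₁, t₂] → ℝ × ℝⁿ (t₁ ≤ t₂) be a curve all of whose increments lie in the closed future causal cone, i.e. σ(s') − σ(s) ∈ C for all s ≤ s' in [t₁, t₂]. Then the total variation of σ on [t₁, t₂] with respect to the Euclidean distance is at most √2 · (σ⁰(t₂) − σ⁰(t₁)), where σ⁰ denotes the time component of σ. (This is the key flat-coordinate estimate in the proof of Lemma 2.3 of the paper, which bounds the Riemannian length of a causal curve by the increment of the time coordinate.) -/

import Mathlib

open Filter Set
open scoped BigOperators ENNReal

noncomputable section

/-- Minkowski space modeled as `ℝ × ℝⁿ` with the Euclidean norm,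
i.e. `EuclideanSpace ℝ (Fin (n+1))` with time component `x 0`. -/
abbrev Mink (n : ℕ) : Type := EuclideanSpace ℝ (Fin (n + 1))

/-- The closed future causal cone `C = {x : x⁰ ≥ ‖x̄‖}`. -/
def causalCone (n : ℕ) : Set (Mink n) :=
  {x | Real.sqrt (∑ i : Fin n, x i.succ ^ 2) ≤ x 0}

lemma causalCone_norm_le {n : ℕ} {x : Mink n} (hx : x ∈ causalCone n) :
    ‖x‖ ≤ Real.sqrt 2 * x 0 := by
  have h0 : (0:ℝ) ≤ x 0 := le_trans (Real.sqrt_nonneg _) hx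
  have hrest : (∑ i : Fin n, x i.succ ^ 2) ≤ x 0 ^ 2 := by
    calc (∑ i : Fin n, x i.succ ^ 2)
        = Real.sqrt (∑ i : Fin n, x i.succ ^ 2) ^ 2 :=
          (Real.sq_sqrt (Finset.sum_nonneg fun i _ => sq_nonneg _)).symm
      _ ≤ x 0 ^ 2 := by
          apply pow_le_pow_left₀ (Real.sqrt_nonneg _) hx
  have hnorm : ‖x‖ = Real.sqrt (∑ i : Fin (n+1), x i ^ 2) := by
    rw [EuclideanSpace.norm_eq]
    simp [Real.norm_eq_abs, sq_abs]
  rw [hnorm]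
  have hsum : (∑ i : Fin (n+1), x i ^ 2) ≤ 2 * x 0 ^ 2 := by
    rw [Fin.sum_univ_succ]
    nlinarith
  calc Real.sqrt (∑ i : Fin (n+1), x i ^ 2) ≤ Real.sqrt (2 * x 0 ^ 2) :=
        Real.sqrt_le_sqrt hsum
    _ = Real.sqrt 2 * x 0 := by
        rw [Real.sqrt_mul (by norm_num), Real.sqrt_sq h0]

/-- If all increments of `σ` on `[t₁, t₂]` lie in the closed future causal cone,
then the total (Euclidean) variation of `σ` on `[t₁, t₂]` is at most
`√2 · (σ⁰(t₂) − σ⁰(t₁))`. -/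
theorem flat_coordinate_estimate (n : ℕ) (hn : 1 ≤ n) (t₁ t₂ : ℝ) (ht : t₁ ≤ t₂)
    (σ : ℝ → Mink n)
    (hC : ∀ ⦃s s'⦄, s ∈ Set.Icc t₁ t₂ → s' ∈ Set.Icc t₁ t₂ → s ≤ s' →
      σ s' - σ s ∈ causalCone n) :
    eVariationOn σ (Set.Icc t₁ t₂) ≤
      ENNReal.ofReal (Real.sqrt 2 * (σ t₂ 0 - σ t₁ 0)) := by
  -- key pointwise estimate
  have key : ∀ ⦃s s'⦄, s ∈ Set.Icc t₁ t₂ → s' ∈ Set.Icc t₁ t₂ → s ≤ s' →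
      edist (σ s') (σ s) ≤ ENNReal.ofReal (Real.sqrt 2 * (σ s' 0 - σ s 0)) := by
    intro s s' hs hs' hss
    have hcone := hC hs hs' hss
    have hle := causalCone_norm_le hcone
    rw [edist_dist, dist_eq_norm]
    apply ENNReal.ofReal_le_ofReal
    simpa using hle
  have mono0 : ∀ ⦃s s'⦄, s ∈ Set.Icc t₁ t₂ → s' ∈ Set.Icc t₁ t₂ → s ≤ s' →
      σ s 0 ≤ σ s' 0 := by
    intro s s' hs hs' hss
    have hcone := hC hs hs' hss
    have h0 : (0:ℝ) ≤ (σ s' - σ s) 0 := le_trans (Real.sqrt_nonneg _) hcone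
    simpa [sub_nonneg] using h0
  rw [eVariationOn]
  apply iSup_le
  rintro ⟨m, u, hu, hus⟩
  calc (∑ i ∈ Finset.range m, edist (σ (u (i+1))) (σ (u i)))
      ≤ ∑ i ∈ Finset.range m, ENNReal.ofReal (Real.sqrt 2 * (σ (u (i+1)) 0 - σ (u i) 0)) := by
        apply Finset.sum_le_sum
        intro i _
        exact key (hus i) (hus (i+1)) (hu (Nat.le_succ i))
    _ = ENNReal.ofReal (∑ i ∈ Finset.range m, Real.sqrt 2 * (σ (u (i+1)) 0 - σ (u i) 0)) := by
        rw [ENNReal.ofReal_sum_of_nonneg]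
        intro i _
        exact mul_nonneg (Real.sqrt_nonneg _)
          (sub_nonneg.2 (mono0 (hus i) (hus (i+1)) (hu (Nat.le_succ i))))
    _ ≤ ENNReal.ofReal (Real.sqrt 2 * (σ t₂ 0 - σ t₁ 0)) := by
        apply ENNReal.ofReal_le_ofReal
        rw [← Finset.mul_sum, Finset.sum_range_sub (fun i => σ (u i) 0)]
        apply mul_le_mul_of_nonneg_left _ (Real.sqrt_nonneg _)
        have h1 : σ t₁ 0 ≤ σ (u 0) 0 := mono0 (left_mem_Icc.2 ht) (hus 0) (hus 0).1
        have h2 : σ (u m) 0 ≤ σ t₂ 0 := mono0 (hus m) (right_mem_Icc.2 ht) (hus m).2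
        linarith
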